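/- (Bender) The group Sp(4,ℤ) is generated by the two matrices K = [[1,0,0,0],[1,-1,0,0],[0,0,1,1],[0,0,0,-1]] and L = [[0,0,-1,0],[0,0,0,-1],[1,0,1,0],[0,1,0,0]]; that is, the subgroup of Sp(4,ℤ) generated by {K, L} is all of Sp(4,ℤ). -/

import Mathlib

set_option maxHeartbeats 1000000
set_option maxRecDepth 8000


open Matrix MatrixGroups

/-- The standard symplectic form matrix `J = [[0, I₂], [-I₂, 0]]` for `Sp(4, ℤ)`. -/
def J4 : Matrix (Fin 4) (Fin 4) ℤ :=
  !![0, 0, 1, 0; 0, 0, 0, 1; -1, 0, 0, 0; 0, -1, 0, 0]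

/-- The matrix `K` from Bender's presentation of `Sp(4, ℤ)`. -/
def Kmat : Matrix (Fin 4) (Fin 4) ℤ :=
  !![1, 0, 0, 0; 1, -1, 0, 0; 0, 0, 1, 1; 0, 0, 0, -1]

/-- The matrix `L` from Bender's presentation of `Sp(4, ℤ)`. -/
def Lmat : Matrix (Fin 4) (Fin 4) ℤ :=
  !![0, 0, -1, 0; 0, 0, 0, -1; 1, 0, 1, 0; 0, 1, 0, 0]

def Linv : Matrix (Fin 4) (Fin 4) ℤ :=
  !![1, 0, 1, 0; 0, 0, 0, 1; -1, 0, 0, 0; 0, -1, 0, 0]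

abbrev GL4 := GL (Fin 4) ℤ

def Ku : GL4 := ⟨Kmat, Kmat, by decide, by decide⟩
def Lu : GL4 := ⟨Lmat, Linv, by decide, by decide⟩

def Hgen : Subgroup GL4 :=
  Subgroup.closure {A : GL (Fin 4) ℤ |
    (A : Matrix (Fin 4) (Fin 4) ℤ) = Kmat ∨ (A : Matrix (Fin 4) (Fin 4) ℤ) = Lmat}

lemma hKu : Ku ∈ Hgen := Subgroup.subset_closure (Or.inl rfl)
lemma hLu : Lu ∈ Hgen := Subgroup.subset_closure (Or.inr rfl)

/-- If `u * B = 1` then the matrix of `u⁻¹` is `B`. -/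
lemma val_inv_eq (u : GL4) (B : Matrix (Fin 4) (Fin 4) ℤ)
    (h : (u : Matrix (Fin 4) (Fin 4) ℤ) * B = 1) :
    ((u⁻¹ : GL4) : Matrix (Fin 4) (Fin 4) ℤ) = B := by
  calc ((u⁻¹ : GL4) : Matrix (Fin 4) (Fin 4) ℤ)
      = ((u⁻¹ : GL4) : Matrix (Fin 4) (Fin 4) ℤ) * ((u : Matrix (Fin 4) (Fin 4) ℤ) * B) := by
        rw [h, mul_one]
    _ = (((u⁻¹ * u : GL4)) : Matrix (Fin 4) (Fin 4) ℤ) * B := by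
        rw [Units.val_mul, mul_assoc]
    _ = B := by rw [inv_mul_cancel]; simp

def wT24 : GL4 := Ku*Lu*Lu*Ku*Lu*Lu*Ku*Lu*Lu
lemma hwT24 : wT24 ∈ Hgen := (mul_mem (mul_mem (mul_mem (mul_mem (mul_mem (mul_mem (mul_mem (mul_mem hKu hLu) hLu) hKu) hLu) hLu) hKu) hLu) hLu)
lemma wT24_val : (wT24 : Matrix (Fin 4) (Fin 4) ℤ) = !![1,0,0,0; 0,1,0,1; 0,0,1,0; 0,0,0,1] := by
  show Kmat*Lmat*Lmat*Kmat*Lmat*Lmat*Kmat*Lmat*Lmat = _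
  decide
def wDT : GL4 := Lu*Lu*Lu*Lu*Lu*Ku*Lu
lemma hwDT : wDT ∈ Hgen := (mul_mem (mul_mem (mul_mem (mul_mem (mul_mem (mul_mem hLu hLu) hLu) hLu) hLu) hKu) hLu)
lemma wDT_val : (wDT : Matrix (Fin 4) (Fin 4) ℤ) = !![1,1,0,0; 0,1,0,0; 0,0,1,0; 0,0,-1,1] := by
  show Lmat*Lmat*Lmat*Lmat*Lmat*Kmat*Lmat = _
  decide
def wTm : GL4 := Lu⁻¹*Lu⁻¹*Lu⁻¹*Lu⁻¹*Ku*Lu⁻¹*Lu⁻¹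
lemma hwTm : wTm ∈ Hgen := (mul_mem (mul_mem (mul_mem (mul_mem (mul_mem (mul_mem (inv_mem hLu) (inv_mem hLu)) (inv_mem hLu)) (inv_mem hLu)) hKu) (inv_mem hLu)) (inv_mem hLu))
lemma wTm_val : (wTm : Matrix (Fin 4) (Fin 4) ℤ) = !![1,0,0,1; 0,1,1,0; 0,0,1,0; 0,0,0,1] := by
  show Linv*Linv*Linv*Linv*Kmat*Linv*Linv = _
  decide
def wDS : GL4 := Lu*Ku*Lu⁻¹*Lu⁻¹*Lu⁻¹*Lu⁻¹*Lu⁻¹*Ku*Lu⁻¹*Lu⁻¹*Lu⁻¹*Lu⁻¹*Lu⁻¹*Ku*Lu*Lu*Ku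
lemma hwDS : wDS ∈ Hgen := (mul_mem (mul_mem (mul_mem (mul_mem (mul_mem (mul_mem (mul_mem (mul_mem (mul_mem (mul_mem (mul_mem (mul_mem (mul_mem (mul_mem (mul_mem (mul_mem hLu hKu) (inv_mem hLu)) (inv_mem hLu)) (inv_mem hLu)) (inv_mem hLu)) (inv_mem hLu)) hKu) (inv_mem hLu)) (inv_mem hLu)) (inv_mem hLu)) (inv_mem hLu)) (inv_mem hLu)) hKu) hLu) hLu) hKu)
lemma wDS_val : (wDS : Matrix (Fin 4) (Fin 4) ℤ) = !![0,-1,0,0; 1,0,0,0; 0,0,0,-1; 0,0,1,0] := by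
  show Lmat*Kmat*Linv*Linv*Linv*Linv*Linv*Kmat*Linv*Linv*Linv*Linv*Linv*Kmat*Lmat*Lmat*Kmat = _
  decide

def wT13 : GL4 := wDS * wT24 * wDS⁻¹
def wJm : GL4 := Lu * wT13⁻¹
def wS13 : GL4 := wT13⁻¹ * (wJm * wT13⁻¹ * wJm⁻¹) * wT13⁻¹
def wS24 : GL4 := wS13⁻¹ * wJm

lemma hwT13 : wT13 ∈ Hgen := mul_mem (mul_mem hwDS hwT24) (inv_mem hwDS)
lemma hwJm : wJm ∈ Hgen := mul_mem hLu (inv_mem hwT13)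
lemma hwS13 : wS13 ∈ Hgen :=
  mul_mem (mul_mem (inv_mem hwT13) (mul_mem (mul_mem hwJm (inv_mem hwT13)) (inv_mem hwJm)))
    (inv_mem hwT13)
lemma hwS24 : wS24 ∈ Hgen := mul_mem (inv_mem hwS13) hwJm

lemma wDSi_val : ((wDS⁻¹ : GL4) : Matrix (Fin 4) (Fin 4) ℤ)
    = !![0,1,0,0; -1,0,0,0; 0,0,0,1; 0,0,-1,0] :=
  val_inv_eq _ _ (by rw [wDS_val]; decide)

lemma wT13_val : (wT13 : Matrix (Fin 4) (Fin 4) ℤ) = !![1,0,1,0; 0,1,0,0; 0,0,1,0; 0,0,0,1] := by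
  show (wDS : Matrix (Fin 4) (Fin 4) ℤ) * wT24 * (wDS⁻¹ : GL4) = _
  rw [wDS_val, wT24_val, wDSi_val]; decide

lemma wT13i_val : ((wT13⁻¹ : GL4) : Matrix (Fin 4) (Fin 4) ℤ)
    = !![1,0,-1,0; 0,1,0,0; 0,0,1,0; 0,0,0,1] :=
  val_inv_eq _ _ (by rw [wT13_val]; decide)

lemma wJm_val : (wJm : Matrix (Fin 4) (Fin 4) ℤ) = !![0,0,-1,0; 0,0,0,-1; 1,0,0,0; 0,1,0,0] := by
  show (Lu : Matrix (Fin 4) (Fin 4) ℤ) * (wT13⁻¹ : GL4) = _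
  rw [wT13i_val]; decide

lemma wJmi_val : ((wJm⁻¹ : GL4) : Matrix (Fin 4) (Fin 4) ℤ)
    = !![0,0,1,0; 0,0,0,1; -1,0,0,0; 0,-1,0,0] :=
  val_inv_eq _ _ (by rw [wJm_val]; decide)

lemma wS13_val : (wS13 : Matrix (Fin 4) (Fin 4) ℤ) = !![0,0,-1,0; 0,1,0,0; 1,0,0,0; 0,0,0,1] := by
  show ((wT13⁻¹ : GL4) : Matrix (Fin 4) (Fin 4) ℤ) * ((wJm : Matrix (Fin 4) (Fin 4) ℤ)
      * (wT13⁻¹ : GL4) * ((wJm⁻¹ : GL4) : Matrix (Fin 4) (Fin 4) ℤ)) * (wT13⁻¹ : GL4) = _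
  rw [wT13i_val, wJm_val, wJmi_val]; decide

lemma wS13i_val : ((wS13⁻¹ : GL4) : Matrix (Fin 4) (Fin 4) ℤ)
    = !![0,0,1,0; 0,1,0,0; -1,0,0,0; 0,0,0,1] :=
  val_inv_eq _ _ (by rw [wS13_val]; decide)

lemma wS24_val : (wS24 : Matrix (Fin 4) (Fin 4) ℤ) = !![1,0,0,0; 0,0,0,-1; 0,0,1,0; 0,1,0,0] := by
  show ((wS13⁻¹ : GL4) : Matrix (Fin 4) (Fin 4) ℤ) * wJm = _
  rw [wS13i_val, wJm_val]; decide

/-! ### Embeddings of SL(2,ℤ) -/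

def e13 (A : Matrix (Fin 2) (Fin 2) ℤ) : Matrix (Fin 4) (Fin 4) ℤ :=
  !![A 0 0, 0, A 0 1, 0; 0, 1, 0, 0; A 1 0, 0, A 1 1, 0; 0, 0, 0, 1]
def e24 (A : Matrix (Fin 2) (Fin 2) ℤ) : Matrix (Fin 4) (Fin 4) ℤ :=
  !![1, 0, 0, 0; 0, A 0 0, 0, A 0 1; 0, 0, 1, 0; 0, A 1 0, 0, A 1 1]
def eD (A B : Matrix (Fin 2) (Fin 2) ℤ) : Matrix (Fin 4) (Fin 4) ℤ :=
  !![A 0 0, A 0 1, 0, 0; A 1 0, A 1 1, 0, 0; 0, 0, B 0 0, B 1 0; 0, 0, B 0 1, B 1 1]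

lemma e13_mul (A B : Matrix (Fin 2) (Fin 2) ℤ) : e13 (A * B) = e13 A * e13 B := by
  ext i j
  fin_cases i <;> fin_cases j <;>
    simp [e13, Matrix.mul_apply, Fin.sum_univ_four, Fin.sum_univ_two, Matrix.vecHead, Matrix.vecTail]

lemma e24_mul (A B : Matrix (Fin 2) (Fin 2) ℤ) : e24 (A * B) = e24 A * e24 B := by
  ext i j
  fin_cases i <;> fin_cases j <;>
    simp [e24, Matrix.mul_apply, Fin.sum_univ_four, Fin.sum_univ_two, Matrix.vecHead, Matrix.vecTail]

lemma eD_mul (A A' B B' : Matrix (Fin 2) (Fin 2) ℤ) :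
    eD (A * A') (B' * B) = eD A B * eD A' B' := by
  ext i j
  fin_cases i <;> fin_cases j <;>
    simp [eD, Matrix.mul_apply, Fin.sum_univ_four, Fin.sum_univ_two, Matrix.vecHead, Matrix.vecTail] <;> ring

lemma e13_one : e13 1 = 1 := by decide
lemma e24_one : e24 1 = 1 := by decide
lemma eD_one : eD 1 1 = 1 := by decide

open Matrix.SpecialLinearGroup in
def E13 (U : SL(2, ℤ)) : GL4 :=
  ⟨e13 ↑U, e13 ↑(U⁻¹),
    by rw [← e13_mul, ← coe_mul, mul_inv_cancel, coe_one, e13_one],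
    by rw [← e13_mul, ← coe_mul, inv_mul_cancel, coe_one, e13_one]⟩

open Matrix.SpecialLinearGroup in
def E24 (U : SL(2, ℤ)) : GL4 :=
  ⟨e24 ↑U, e24 ↑(U⁻¹),
    by rw [← e24_mul, ← coe_mul, mul_inv_cancel, coe_one, e24_one],
    by rw [← e24_mul, ← coe_mul, inv_mul_cancel, coe_one, e24_one]⟩

open Matrix.SpecialLinearGroup in
def ED (U : SL(2, ℤ)) : GL4 :=
  ⟨eD ↑U ↑(U⁻¹), eD ↑(U⁻¹) ↑U,
    by rw [← eD_mul, ← coe_mul, mul_inv_cancel, coe_one, eD_one],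
    by rw [← eD_mul, ← coe_mul, inv_mul_cancel, coe_one, eD_one]⟩

lemma E13_mul (U V : SL(2, ℤ)) : E13 (U * V) = E13 U * E13 V :=
  Units.ext (by show e13 _ = e13 _ * e13 _; rw [← e13_mul]; norm_cast)
lemma E24_mul (U V : SL(2, ℤ)) : E24 (U * V) = E24 U * E24 V :=
  Units.ext (by show e24 _ = e24 _ * e24 _; rw [← e24_mul]; norm_cast)
lemma ED_mul (U V : SL(2, ℤ)) : ED (U * V) = ED U * ED V :=
  Units.ext (by
    show eD _ _ = eD _ _ * eD _ _
    rw [← eD_mul, Matrix.SpecialLinearGroup.coe_mul,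
      show (U * V)⁻¹ = V⁻¹ * U⁻¹ from _root_.mul_inv_rev U V,
      Matrix.SpecialLinearGroup.coe_mul])

lemma E13_inv (U : SL(2, ℤ)) : E13 U⁻¹ = (E13 U)⁻¹ :=
  Units.ext rfl
lemma E24_inv (U : SL(2, ℤ)) : E24 U⁻¹ = (E24 U)⁻¹ :=
  Units.ext rfl
lemma ED_inv (U : SL(2, ℤ)) : ED U⁻¹ = (ED U)⁻¹ :=
  Units.ext (by show eD _ _ = eD _ _; rw [inv_inv])

/-! ### SL(2,ℤ) is generated by S and T -/

open ModularGroup in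
theorem SL2_mem_closure (U : SL(2, ℤ)) :
    U ∈ Subgroup.closure ({ModularGroup.S, ModularGroup.T} : Set SL(2, ℤ)) := by
  set Cl2 := Subgroup.closure ({ModularGroup.S, ModularGroup.T} : Set SL(2, ℤ)) with hCl2
  have hS : ModularGroup.S ∈ Cl2 := Subgroup.subset_closure (Or.inl rfl)
  have hT : ModularGroup.T ∈ Cl2 := Subgroup.subset_closure (Or.inr rfl)
  suffices h : ∀ n : ℕ, ∀ U : SL(2, ℤ), (U.1 1 0).natAbs = n → U ∈ Cl2 from h _ U rfl
  intro n
  induction n using Nat.strong_induction_on with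
  | _ n ih =>
    intro U hU
    by_cases hc : U.1 1 0 = 0
    · have hdet : U.1.det = 1 := U.2
      rw [Matrix.det_fin_two] at hdet
      rw [hc, mul_zero, sub_zero] at hdet
      rcases Int.mul_eq_one_iff_eq_one_or_neg_one.mp hdet with ⟨ha, hd⟩ | ⟨ha, hd⟩
      · have hUeq : U = ModularGroup.T ^ (U.1 0 1) := by
          apply Subtype.coe_injective
          show U.1 = ((ModularGroup.T ^ (U.1 0 1) : SL(2, ℤ)) : Matrix (Fin 2) (Fin 2) ℤ)
          rw [coe_T_zpow]
          ext i j
          fin_cases i <;> fin_cases j <;> simp [ha, hd, hc]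
        rw [hUeq]
        exact zpow_mem hT _
      · have hUeq : U = ModularGroup.S * ModularGroup.S * ModularGroup.T ^ (-(U.1 0 1)) := by
          apply Subtype.coe_injective
          show U.1 = ((ModularGroup.S * ModularGroup.S * ModularGroup.T ^ (-(U.1 0 1)) :
            SL(2, ℤ)) : Matrix (Fin 2) (Fin 2) ℤ)
          rw [Matrix.SpecialLinearGroup.coe_mul, Matrix.SpecialLinearGroup.coe_mul,
            coe_S, coe_T_zpow]
          ext i j
          fin_cases i <;> fin_cases j <;>
            simp [Matrix.mul_apply, Fin.sum_univ_two, ha, hd, hc]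
        rw [hUeq]
        exact mul_mem (mul_mem hS hS) (zpow_mem hT _)
    · have hc' : U.1 1 0 ≠ 0 := hc
      set q : ℤ := U.1 0 0 / U.1 1 0 with hq
      set V : SL(2, ℤ) := ModularGroup.S * ModularGroup.T ^ (-q) * U with hV
      have hVc : V.1 1 0 = U.1 0 0 % U.1 1 0 := by
        rw [hV, Matrix.SpecialLinearGroup.coe_mul, Matrix.SpecialLinearGroup.coe_mul,
          coe_S, coe_T_zpow]
        simp [Matrix.mul_apply, Fin.sum_univ_two]
        rw [Int.emod_def, hq]; ring
      have h1 : 0 ≤ U.1 0 0 % U.1 1 0 := Int.emod_nonneg _ hc'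
      have h2 : U.1 0 0 % U.1 1 0 < (U.1 1 0).natAbs := by
        rcases hc'.lt_or_gt with hneg | hpos
        · have h3 : (0:ℤ) < -(U.1 1 0) := by omega
          have := Int.emod_lt_of_pos (U.1 0 0) h3
          rw [Int.emod_neg] at this
          omega
        · have := Int.emod_lt_of_pos (U.1 0 0) hpos
          omega
      have hlt : (U.1 0 0 % U.1 1 0).natAbs < n := by omega
      have hVmem : V ∈ Cl2 := ih _ hlt V (by rw [hVc])
      have hUeq : U = ModularGroup.T ^ q * ModularGroup.S⁻¹ * V := by
        rw [hV]; group
      rw [hUeq]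
      exact mul_mem (mul_mem (zpow_mem hT q) (inv_mem hS)) hVmem

lemma E13_one : E13 1 = 1 := Units.ext (by decide)
lemma E24_one : E24 1 = 1 := Units.ext (by decide)
lemma ED_one : ED 1 = 1 := Units.ext (by decide)

lemma E13_S : E13 ModularGroup.S = wS13 := Units.ext (by rw [wS13_val]; decide)
lemma E13_T : E13 ModularGroup.T = wT13 := Units.ext (by rw [wT13_val]; decide)
lemma E24_S : E24 ModularGroup.S = wS24 := Units.ext (by rw [wS24_val]; decide)
lemma E24_T : E24 ModularGroup.T = wT24 := Units.ext (by rw [wT24_val]; decide)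
lemma ED_S : ED ModularGroup.S = wDS := Units.ext (by rw [wDS_val]; decide)
lemma ED_T : ED ModularGroup.T = wDT := Units.ext (by rw [wDT_val]; decide)

lemma E13_mem (U : SL(2, ℤ)) : E13 U ∈ Hgen := by
  refine Subgroup.closure_induction (p := fun V _ => E13 V ∈ Hgen) ?_ ?_ ?_ ?_
    (SL2_mem_closure U)
  · rintro x (rfl | rfl)
    · rw [E13_S]; exact hwS13
    · rw [E13_T]; exact hwT13
  · show E13 1 ∈ Hgen
    rw [E13_one]; exact one_mem _
  · intro x y _ _ hpx hpy; rw [E13_mul]; exact mul_mem hpx hpy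
  · intro x _ hpx; rw [E13_inv]; exact inv_mem hpx

lemma E24_mem (U : SL(2, ℤ)) : E24 U ∈ Hgen := by
  refine Subgroup.closure_induction (p := fun V _ => E24 V ∈ Hgen) ?_ ?_ ?_ ?_
    (SL2_mem_closure U)
  · rintro x (rfl | rfl)
    · rw [E24_S]; exact hwS24
    · rw [E24_T]; exact hwT24
  · show E24 1 ∈ Hgen
    rw [E24_one]; exact one_mem _
  · intro x y _ _ hpx hpy; rw [E24_mul]; exact mul_mem hpx hpy
  · intro x _ hpx; rw [E24_inv]; exact inv_mem hpx

lemma ED_mem (U : SL(2, ℤ)) : ED U ∈ Hgen := by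
  refine Subgroup.closure_induction (p := fun V _ => ED V ∈ Hgen) ?_ ?_ ?_ ?_
    (SL2_mem_closure U)
  · rintro x (rfl | rfl)
    · rw [ED_S]; exact hwDS
    · rw [ED_T]; exact hwDT
  · show ED 1 ∈ Hgen
    rw [ED_one]; exact one_mem _
  · intro x y _ _ hpx hpy; rw [ED_mul]; exact mul_mem hpx hpy
  · intro x _ hpx; rw [ED_inv]; exact inv_mem hpx

/-! ### Bezout: an SL2 matrix bringing (a,b) to (gcd,0) -/

lemma exists_SL2_gcd (a b : ℤ) : ∃ U : SL(2, ℤ),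
    U.1 0 0 * a + U.1 0 1 * b = (Int.gcd a b : ℤ) ∧ U.1 1 0 * a + U.1 1 1 * b = 0 := by
  by_cases h0 : a = 0 ∧ b = 0
  · refine ⟨1, ?_, ?_⟩ <;> simp [h0.1, h0.2]
  · have hg : (Int.gcd a b : ℤ) ≠ 0 := by
      intro h
      exact h0 (Int.gcd_eq_zero_iff.mp (by exact_mod_cast h))
    obtain ⟨a', ha'⟩ := Int.gcd_dvd_left (a := a) (b := b)
    obtain ⟨b', hb'⟩ := Int.gcd_dvd_right (a := a) (b := b)
    have hbez : (Int.gcd a b : ℤ) = a * Int.gcdA a b + b * Int.gcdB a b :=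
      Int.gcd_eq_gcd_ab a b
    have hdet1 : a' * Int.gcdA a b + b' * Int.gcdB a b = 1 := by
      apply mul_left_cancel₀ hg
      rw [mul_one]
      calc (Int.gcd a b : ℤ) * (a' * Int.gcdA a b + b' * Int.gcdB a b)
          = a * Int.gcdA a b + b * Int.gcdB a b := by
            linear_combination (-(Int.gcdA a b)) * ha' + (-(Int.gcdB a b)) * hb'
        _ = (Int.gcd a b : ℤ) := hbez.symm
    refine ⟨⟨!![Int.gcdA a b, Int.gcdB a b; -b', a'], ?_⟩, ?_, ?_⟩
    · rw [Matrix.det_fin_two_of]; linear_combination hdet1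
    · show Int.gcdA a b * a + Int.gcdB a b * b = (Int.gcd a b : ℤ)
      linear_combination -hbez
    · show -b' * a + a' * b = 0
      linear_combination (-b') * ha' + a' * hb'

/-! ### zpow values -/

lemma wTmi_val : ((wTm⁻¹ : GL4) : Matrix (Fin 4) (Fin 4) ℤ)
    = !![1,0,0,-1; 0,1,-1,0; 0,0,1,0; 0,0,0,1] :=
  val_inv_eq _ _ (by rw [wTm_val]; decide)

lemma wT13i_val' : ((wT13⁻¹ : GL4) : Matrix (Fin 4) (Fin 4) ℤ)
    = !![1,0,-1,0; 0,1,0,0; 0,0,1,0; 0,0,0,1] := wT13i_val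

lemma wTm_zpow (n : ℤ) : ((wTm ^ n : GL4) : Matrix (Fin 4) (Fin 4) ℤ)
    = !![1,0,0,n; 0,1,n,0; 0,0,1,0; 0,0,0,1] := by
  induction n using Int.induction_on with
  | zero => rw [zpow_zero]; decide
  | succ k ih =>
    rw [_root_.zpow_add_one, Units.val_mul, ih, wTm_val]
    ext i j
    fin_cases i <;> fin_cases j <;>
      simp [Matrix.mul_apply, Fin.sum_univ_four, Matrix.vecHead, Matrix.vecTail] <;> ring
  | pred k ih =>
    rw [_root_.zpow_sub_one, Units.val_mul, ih, wTmi_val]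
    ext i j
    fin_cases i <;> fin_cases j <;>
      simp [Matrix.mul_apply, Fin.sum_univ_four, Matrix.vecHead, Matrix.vecTail] <;> ring

lemma wT13_zpow (n : ℤ) : ((wT13 ^ n : GL4) : Matrix (Fin 4) (Fin 4) ℤ)
    = !![1,0,n,0; 0,1,0,0; 0,0,1,0; 0,0,0,1] := by
  induction n using Int.induction_on with
  | zero => rw [zpow_zero]; decide
  | succ k ih =>
    rw [_root_.zpow_add_one, Units.val_mul, ih, wT13_val]
    ext i j
    fin_cases i <;> fin_cases j <;>
      simp [Matrix.mul_apply, Fin.sum_univ_four, Matrix.vecHead, Matrix.vecTail] <;> ring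
  | pred k ih =>
    rw [_root_.zpow_sub_one, Units.val_mul, ih, wT13i_val]
    ext i j
    fin_cases i <;> fin_cases j <;>
      simp [Matrix.mul_apply, Fin.sum_univ_four, Matrix.vecHead, Matrix.vecTail] <;> ring

/-! ### Row action lemmas -/

section rows
variable (A B : Matrix (Fin 2) (Fin 2) ℤ) (P : Matrix (Fin 4) (Fin 4) ℤ) (n : ℤ) (j : Fin 4)

lemma e13_row0 : (e13 A * P) 0 j = A 0 0 * P 0 j + A 0 1 * P 2 j := by
  rw [Matrix.mul_apply, Fin.sum_univ_four]
  simp [e13, Matrix.vecHead, Matrix.vecTail]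
lemma e13_row1 : (e13 A * P) 1 j = P 1 j := by
  rw [Matrix.mul_apply, Fin.sum_univ_four]
  simp [e13, Matrix.vecHead, Matrix.vecTail]
lemma e13_row2 : (e13 A * P) 2 j = A 1 0 * P 0 j + A 1 1 * P 2 j := by
  rw [Matrix.mul_apply, Fin.sum_univ_four]
  simp [e13, Matrix.vecHead, Matrix.vecTail]
lemma e13_row3 : (e13 A * P) 3 j = P 3 j := by
  rw [Matrix.mul_apply, Fin.sum_univ_four]
  simp [e13, Matrix.vecHead, Matrix.vecTail]

lemma e24_row0 : (e24 A * P) 0 j = P 0 j := by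
  rw [Matrix.mul_apply, Fin.sum_univ_four]
  simp [e24, Matrix.vecHead, Matrix.vecTail]
lemma e24_row1 : (e24 A * P) 1 j = A 0 0 * P 1 j + A 0 1 * P 3 j := by
  rw [Matrix.mul_apply, Fin.sum_univ_four]
  simp [e24, Matrix.vecHead, Matrix.vecTail]
lemma e24_row2 : (e24 A * P) 2 j = P 2 j := by
  rw [Matrix.mul_apply, Fin.sum_univ_four]
  simp [e24, Matrix.vecHead, Matrix.vecTail]
lemma e24_row3 : (e24 A * P) 3 j = A 1 0 * P 1 j + A 1 1 * P 3 j := by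
  rw [Matrix.mul_apply, Fin.sum_univ_four]
  simp [e24, Matrix.vecHead, Matrix.vecTail]

lemma eD_row0 : (eD A B * P) 0 j = A 0 0 * P 0 j + A 0 1 * P 1 j := by
  rw [Matrix.mul_apply, Fin.sum_univ_four]
  simp [eD, Matrix.vecHead, Matrix.vecTail]
lemma eD_row1 : (eD A B * P) 1 j = A 1 0 * P 0 j + A 1 1 * P 1 j := by
  rw [Matrix.mul_apply, Fin.sum_univ_four]
  simp [eD, Matrix.vecHead, Matrix.vecTail]
lemma eD_row2 : (eD A B * P) 2 j = B 0 0 * P 2 j + B 1 0 * P 3 j := by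
  rw [Matrix.mul_apply, Fin.sum_univ_four]
  simp [eD, Matrix.vecHead, Matrix.vecTail]
lemma eD_row3 : (eD A B * P) 3 j = B 0 1 * P 2 j + B 1 1 * P 3 j := by
  rw [Matrix.mul_apply, Fin.sum_univ_four]
  simp [eD, Matrix.vecHead, Matrix.vecTail]

lemma tm_row0 : (((wTm ^ n : GL4) : Matrix (Fin 4) (Fin 4) ℤ) * P) 0 j = P 0 j + n * P 3 j := by
  rw [wTm_zpow, Matrix.mul_apply, Fin.sum_univ_four]
  simp [Matrix.vecHead, Matrix.vecTail]
lemma tm_row1 : (((wTm ^ n : GL4) : Matrix (Fin 4) (Fin 4) ℤ) * P) 1 j = P 1 j + n * P 2 j := by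
  rw [wTm_zpow, Matrix.mul_apply, Fin.sum_univ_four]
  simp [Matrix.vecHead, Matrix.vecTail]
lemma tm_row2 : (((wTm ^ n : GL4) : Matrix (Fin 4) (Fin 4) ℤ) * P) 2 j = P 2 j := by
  rw [wTm_zpow, Matrix.mul_apply, Fin.sum_univ_four]
  simp [Matrix.vecHead, Matrix.vecTail]
lemma tm_row3 : (((wTm ^ n : GL4) : Matrix (Fin 4) (Fin 4) ℤ) * P) 3 j = P 3 j := by
  rw [wTm_zpow, Matrix.mul_apply, Fin.sum_univ_four]
  simp [Matrix.vecHead, Matrix.vecTail]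

lemma t13_row0 : (((wT13 ^ n : GL4) : Matrix (Fin 4) (Fin 4) ℤ) * P) 0 j
    = P 0 j + n * P 2 j := by
  rw [wT13_zpow, Matrix.mul_apply, Fin.sum_univ_four]
  simp [Matrix.vecHead, Matrix.vecTail]
lemma t13_row1 : (((wT13 ^ n : GL4) : Matrix (Fin 4) (Fin 4) ℤ) * P) 1 j = P 1 j := by
  rw [wT13_zpow, Matrix.mul_apply, Fin.sum_univ_four]
  simp [Matrix.vecHead, Matrix.vecTail]
lemma t13_row2 : (((wT13 ^ n : GL4) : Matrix (Fin 4) (Fin 4) ℤ) * P) 2 j = P 2 j := by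
  rw [wT13_zpow, Matrix.mul_apply, Fin.sum_univ_four]
  simp [Matrix.vecHead, Matrix.vecTail]
lemma t13_row3 : (((wT13 ^ n : GL4) : Matrix (Fin 4) (Fin 4) ℤ) * P) 3 j = P 3 j := by
  rw [wT13_zpow, Matrix.mul_apply, Fin.sum_univ_four]
  simp [Matrix.vecHead, Matrix.vecTail]

end rows

private theorem sp4_mul_aux (A B : Matrix (Fin 4) (Fin 4) ℤ)
    (hA : Aᵀ * J4 * A = J4) (hB : Bᵀ * J4 * B = J4) :
    (A * B)ᵀ * J4 * (A * B) = J4 := by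
  calc (A * B)ᵀ * J4 * (A * B) = Bᵀ * (Aᵀ * J4 * A) * B := by
        rw [transpose_mul]; noncomm_ring
    _ = Bᵀ * J4 * B := by rw [hA]
    _ = J4 := hB

private theorem sp4_inv_aux (A B : Matrix (Fin 4) (Fin 4) ℤ)
    (hA : Aᵀ * J4 * A = J4) (hAB : A * B = 1) :
    Bᵀ * J4 * B = J4 := by
  calc Bᵀ * J4 * B = Bᵀ * (Aᵀ * J4 * A) * B := by rw [hA]
    _ = (A * B)ᵀ * J4 * (A * B) := by rw [transpose_mul]; noncomm_ring
    _ = J4 := by rw [hAB]; simp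

/-- `Sp(4, ℤ)` as a subgroup of `GL(4, ℤ)`: the invertible integer matrices `A`
with `Aᵀ J A = J`. -/
def Sp4 : Subgroup (GL (Fin 4) ℤ) where
  carrier := {A | (A : Matrix (Fin 4) (Fin 4) ℤ)ᵀ * J4 * (A : Matrix (Fin 4) (Fin 4) ℤ) = J4}
  one_mem' := by simp
  mul_mem' := by
    intro a b ha hb
    simp only [Set.mem_setOf_eq, Units.val_mul] at *
    exact sp4_mul_aux _ _ ha hb
  inv_mem' := by
    intro a ha
    simp only [Set.mem_setOf_eq] at *
    exact sp4_inv_aux (a : Matrix (Fin 4) (Fin 4) ℤ) _ ha a.mul_inv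

lemma Hgen_le_Sp4 : Hgen ≤ Sp4 := by
  have : Hgen = Subgroup.closure {A : GL (Fin 4) ℤ |
      (A : Matrix (Fin 4) (Fin 4) ℤ) = Kmat ∨ (A : Matrix (Fin 4) (Fin 4) ℤ) = Lmat} := rfl
  rw [this, Subgroup.closure_le]
  rintro A (hA | hA) <;>
    · show (A : Matrix (Fin 4) (Fin 4) ℤ)ᵀ * J4 * (A : Matrix (Fin 4) (Fin 4) ℤ) = J4
      rw [hA]; decide

theorem stmt_12 :
    Subgroup.closure {A : GL (Fin 4) ℤ |
        (A : Matrix (Fin 4) (Fin 4) ℤ) = Kmat ∨ (A : Matrix (Fin 4) (Fin 4) ℤ) = Lmat} =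
      Sp4 := by
  show Hgen = Sp4
  apply le_antisymm Hgen_le_Sp4
  intro M hM
  -- Stage 1 : make entry (2,0) vanish
  obtain ⟨U1, hU1a, hU1b⟩ := exists_SL2_gcd (M.1 0 0) (M.1 2 0)
  set N1 : GL4 := E13 U1 * M with hN1def
  have hN1v : N1.1 = e13 U1.1 * M.1 := rfl
  have n1_2 : N1.1 2 0 = 0 := by rw [hN1v, e13_row2]; linear_combination hU1b
  -- Stage 2 : make entry (3,0) vanish
  obtain ⟨U2, hU2a, hU2b⟩ := exists_SL2_gcd (N1.1 1 0) (N1.1 3 0)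
  set N2 : GL4 := E24 U2 * N1 with hN2def
  have hN2v : N2.1 = e24 U2.1 * N1.1 := rfl
  have n2_2 : N2.1 2 0 = 0 := by rw [hN2v, e24_row2]; exact n1_2
  have n2_3 : N2.1 3 0 = 0 := by rw [hN2v, e24_row3]; linear_combination hU2b
  -- the two remaining entries of the first column are coprime
  have hmat1 : ((N2⁻¹ : GL4) : Matrix (Fin 4) (Fin 4) ℤ) * N2.1 = 1 := by
    rw [← Units.val_mul, inv_mul_cancel]; rfl
  have hone := congrFun (congrFun hmat1 0) 0
  rw [Matrix.mul_apply, Fin.sum_univ_four, n2_2, n2_3, Matrix.one_apply_eq] at hone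
  have hcop : IsCoprime (N2.1 0 0) (N2.1 1 0) :=
    ⟨((N2⁻¹ : GL4) : Matrix (Fin 4) (Fin 4) ℤ) 0 0,
     ((N2⁻¹ : GL4) : Matrix (Fin 4) (Fin 4) ℤ) 0 1, by linear_combination hone⟩
  have hgcd : Int.gcd (N2.1 0 0) (N2.1 1 0) = 1 := Int.isCoprime_iff_gcd_eq_one.mp hcop
  -- Stage 3 : first column becomes e₀
  obtain ⟨U3, hU3a, hU3b⟩ := exists_SL2_gcd (N2.1 0 0) (N2.1 1 0)
  have hU3a' : U3.1 0 0 * N2.1 0 0 + U3.1 0 1 * N2.1 1 0 = 1 := by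
    rw [hU3a, hgcd]; exact Nat.cast_one
  set N3 : GL4 := ED U3 * N2 with hN3def
  have hN3v : N3.1 = eD U3.1 (U3⁻¹).1 * N2.1 := rfl
  have n3_0 : N3.1 0 0 = 1 := by rw [hN3v, eD_row0]; linear_combination hU3a'
  have n3_1 : N3.1 1 0 = 0 := by rw [hN3v, eD_row1]; linear_combination hU3b
  have n3_2 : N3.1 2 0 = 0 := by rw [hN3v, eD_row2, n2_2, n2_3]; ring
  have n3_3 : N3.1 3 0 = 0 := by rw [hN3v, eD_row3, n2_2, n2_3]; ring
  have hN3sp : N3 ∈ Sp4 := by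
    rw [hN3def, hN2def, hN1def]
    exact mul_mem (Hgen_le_Sp4 (ED_mem U3)) (mul_mem (Hgen_le_Sp4 (E24_mem U2))
      (mul_mem (Hgen_le_Sp4 (E13_mem U1)) hM))
  have hN3 : N3.1ᵀ * J4 * N3.1 = J4 := hN3sp
  -- entry (2,2) equals 1
  have w2 : N3.1 2 2 = 1 := by
    have h := congrFun (congrFun hN3 0) 2
    simp [Matrix.mul_apply, Fin.sum_univ_four, Matrix.transpose_apply, J4,
      n3_0, n3_1, n3_2, n3_3, Matrix.vecHead, Matrix.vecTail] at h
    linarith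
  -- Stage 4 : make entry (3,2) vanish
  obtain ⟨U4, hU4a, hU4b⟩ := exists_SL2_gcd (N3.1 1 2) (N3.1 3 2)
  set N4 : GL4 := E24 U4 * N3 with hN4def
  have hN4v : N4.1 = e24 U4.1 * N3.1 := rfl
  have n4_0 : N4.1 0 0 = 1 := by rw [hN4v, e24_row0]; exact n3_0
  have n4_1 : N4.1 1 0 = 0 := by rw [hN4v, e24_row1, n3_1, n3_3]; ring
  have n4_2 : N4.1 2 0 = 0 := by rw [hN4v, e24_row2]; exact n3_2
  have n4_3 : N4.1 3 0 = 0 := by rw [hN4v, e24_row3, n3_1, n3_3]; ring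
  have n4c_2 : N4.1 2 2 = 1 := by rw [hN4v, e24_row2]; exact w2
  have n4c_3 : N4.1 3 2 = 0 := by rw [hN4v, e24_row3]; linear_combination hU4b
  -- Stage 5 : make entry (1,2) vanish
  set N5 : GL4 := wTm ^ (-(N4.1 1 2)) * N4 with hN5def
  have hN5v : N5.1 = ((wTm ^ (-(N4.1 1 2)) : GL4) : Matrix (Fin 4) (Fin 4) ℤ) * N4.1 := rfl
  have n5_0 : N5.1 0 0 = 1 := by rw [hN5v, tm_row0, n4_0, n4_3]; ring
  have n5_1 : N5.1 1 0 = 0 := by rw [hN5v, tm_row1, n4_1, n4_2]; ring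
  have n5_2 : N5.1 2 0 = 0 := by rw [hN5v, tm_row2]; exact n4_2
  have n5_3 : N5.1 3 0 = 0 := by rw [hN5v, tm_row3]; exact n4_3
  have n5c_1 : N5.1 1 2 = 0 := by rw [hN5v, tm_row1, n4c_2]; ring
  have n5c_2 : N5.1 2 2 = 1 := by rw [hN5v, tm_row2]; exact n4c_2
  have n5c_3 : N5.1 3 2 = 0 := by rw [hN5v, tm_row3]; exact n4c_3
  -- Stage 6 : make entry (0,2) vanish
  set N6 : GL4 := wT13 ^ (-(N5.1 0 2)) * N5 with hN6def
  have hN6v : N6.1 = ((wT13 ^ (-(N5.1 0 2)) : GL4) : Matrix (Fin 4) (Fin 4) ℤ) * N5.1 := rfl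
  have n6_0 : N6.1 0 0 = 1 := by rw [hN6v, t13_row0, n5_0, n5_2]; ring
  have n6_1 : N6.1 1 0 = 0 := by rw [hN6v, t13_row1]; exact n5_1
  have n6_2 : N6.1 2 0 = 0 := by rw [hN6v, t13_row2]; exact n5_2
  have n6_3 : N6.1 3 0 = 0 := by rw [hN6v, t13_row3]; exact n5_3
  have n6c_0 : N6.1 0 2 = 0 := by rw [hN6v, t13_row0, n5c_2]; ring
  have n6c_1 : N6.1 1 2 = 0 := by rw [hN6v, t13_row1]; exact n5c_1
  have n6c_2 : N6.1 2 2 = 1 := by rw [hN6v, t13_row2]; exact n5c_2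
  have n6c_3 : N6.1 3 2 = 0 := by rw [hN6v, t13_row3]; exact n5c_3
  have hN6sp : N6 ∈ Sp4 := by
    rw [hN6def]
    refine mul_mem (Hgen_le_Sp4 (zpow_mem hwT13 _)) ?_
    rw [hN5def]
    refine mul_mem (Hgen_le_Sp4 (zpow_mem hwTm _)) ?_
    rw [hN4def]
    exact mul_mem (Hgen_le_Sp4 (E24_mem U4)) hN3sp
  have hN6 : N6.1ᵀ * J4 * N6.1 = J4 := hN6sp
  -- the remaining entries
  have z21 : N6.1 2 1 = 0 := by
    have h := congrFun (congrFun hN6 0) 1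
    simp [Matrix.mul_apply, Fin.sum_univ_four, Matrix.transpose_apply, J4,
      n6_0, n6_1, n6_2, n6_3, Matrix.vecHead, Matrix.vecTail] at h
    linarith
  have z01 : N6.1 0 1 = 0 := by
    have h := congrFun (congrFun hN6 2) 1
    simp [Matrix.mul_apply, Fin.sum_univ_four, Matrix.transpose_apply, J4,
      n6c_0, n6c_1, n6c_2, n6c_3, Matrix.vecHead, Matrix.vecTail] at h
    linarith
  have z23 : N6.1 2 3 = 0 := by
    have h := congrFun (congrFun hN6 0) 3
    simp [Matrix.mul_apply, Fin.sum_univ_four, Matrix.transpose_apply, J4,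
      n6_0, n6_1, n6_2, n6_3, Matrix.vecHead, Matrix.vecTail] at h
    linarith
  have z03 : N6.1 0 3 = 0 := by
    have h := congrFun (congrFun hN6 2) 3
    simp [Matrix.mul_apply, Fin.sum_univ_four, Matrix.transpose_apply, J4,
      n6c_0, n6c_1, n6c_2, n6c_3, Matrix.vecHead, Matrix.vecTail] at h
    linarith
  have hdet6 : N6.1 1 1 * N6.1 3 3 - N6.1 1 3 * N6.1 3 1 = 1 := by
    have h := congrFun (congrFun hN6 1) 3
    simp [Matrix.mul_apply, Fin.sum_univ_four, Matrix.transpose_apply, J4,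
      z21, z01, z23, z03, Matrix.vecHead, Matrix.vecTail] at h
    linear_combination h
  -- identify N6 with an embedded SL2 element
  have hN6E : N6 = E24 (⟨!![N6.1 1 1, N6.1 1 3; N6.1 3 1, N6.1 3 3],
      by rw [Matrix.det_fin_two_of]; linear_combination hdet6⟩ : SL(2, ℤ)) := by
    apply Units.ext
    show N6.1 = e24 !![N6.1 1 1, N6.1 1 3; N6.1 3 1, N6.1 3 3]
    ext i j
    fin_cases i <;> fin_cases j <;>
      simp [e24, Matrix.vecHead, Matrix.vecTail,
        n6_0, n6_1, n6_2, n6_3, n6c_0, n6c_1, n6c_2, n6c_3, z01, z21, z03, z23]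
  have hN6H : N6 ∈ Hgen := by rw [hN6E]; exact E24_mem _
  -- walk back down
  have m5 : N5 ∈ Hgen := by
    have h : N5 = (wT13 ^ (-(N5.1 0 2)))⁻¹ * N6 := by rw [hN6def, inv_mul_cancel_left]
    rw [h]; exact mul_mem (inv_mem (zpow_mem hwT13 _)) hN6H
  have m4 : N4 ∈ Hgen := by
    have h : N4 = (wTm ^ (-(N4.1 1 2)))⁻¹ * N5 := by rw [hN5def, inv_mul_cancel_left]
    rw [h]; exact mul_mem (inv_mem (zpow_mem hwTm _)) m5
  have m3 : N3 ∈ Hgen := by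
    have h : N3 = (E24 U4)⁻¹ * N4 := by rw [hN4def, inv_mul_cancel_left]
    rw [h]; exact mul_mem (inv_mem (E24_mem U4)) m4
  have m2 : N2 ∈ Hgen := by
    have h : N2 = (ED U3)⁻¹ * N3 := by rw [hN3def, inv_mul_cancel_left]
    rw [h]; exact mul_mem (inv_mem (ED_mem U3)) m3
  have m1 : N1 ∈ Hgen := by
    have h : N1 = (E24 U2)⁻¹ * N2 := by rw [hN2def, inv_mul_cancel_left]
    rw [h]; exact mul_mem (inv_mem (E24_mem U2)) m2
  have h : M = (E13 U1)⁻¹ * N1 := by rw [hN1def, inv_mul_cancel_left]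
  rw [h]; exact mul_mem (inv_mem (E13_mem U1)) m1
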